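/- (State-estimate- and input-independence of the right-invariant IMU error dynamics.) Fix ω̃, ã, g ∈ ℝ³ and let f : Matrix 5 5 ℝ → Matrix 5 5 ℝ be the IMU process model: for a 5×5 matrix X with top-left 3×3 block R, 4th-column top entries v ∈ ℝ³, and 5th-column top entries p ∈ ℝ³, f(X) has top-left block R(ω̃)ₓ, 4th-column top entries Rã + g, 5th-column top entries v, and all other entries zero. Then for every 5×5 matrix η of the block form [[R_η, v_η, p_η], [0_{2×3}, I₂]], the right-invariant error vector field g_u(η) := f(η) − η f(I₅) equals the 5×5 matrix whose top-left 3×3 block is 0, whose 4th-column top entries are g − R_η g, whose 5th-column top entries are v_η, and whose remaining entries are zero. In particular, f(η) − η f(I₅) does not depend on the inputs ω̃ and ã. -/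
import Mathlib


open Matrix

/-- The skew-symmetric matrix `(ω)ₓ` associated with `ω ∈ ℝ³`. -/
def skew3 (ω : Fin 3 → ℝ) : Matrix (Fin 3) (Fin 3) ℝ :=
  !![0, -ω 2, ω 1; ω 2, 0, -ω 0; -ω 1, ω 0, 0]

/-- The top-left `3 × 3` block `R` of a `5 × 5` matrix. -/
def blockR (X : Matrix (Fin 5) (Fin 5) ℝ) : Matrix (Fin 3) (Fin 3) ℝ :=
  X.submatrix (Fin.castLE (by norm_num)) (Fin.castLE (by norm_num))

/-- The top three entries `v` of the 4th column of a `5 × 5` matrix. -/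
def colv (X : Matrix (Fin 5) (Fin 5) ℝ) : Fin 3 → ℝ :=
  fun i => X (Fin.castLE (by norm_num) i) 3

/-- The `5 × 5` matrix of block form `[[R, v, p], [0₂ₓ₃, I₂]]` (an element of
SE₂(3) when `R ∈ SO(3)`). -/
def se23 (R : Matrix (Fin 3) (Fin 3) ℝ) (v p : Fin 3 → ℝ) :
    Matrix (Fin 5) (Fin 5) ℝ :=
  Matrix.of fun i j =>
    if hi : (i : ℕ) < 3 then
      if hj : (j : ℕ) < 3 then R ⟨i, hi⟩ ⟨j, hj⟩
      else if (j : ℕ) = 3 then v ⟨i, hi⟩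
      else p ⟨i, hi⟩
    else if (i : ℕ) = (j : ℕ) then 1 else 0

/-- The `5 × 5` matrix with top-left block `R`, 4th-column top entries `v`,
5th-column top entries `p`, and all remaining entries zero. -/
def blk5 (R : Matrix (Fin 3) (Fin 3) ℝ) (v p : Fin 3 → ℝ) :
    Matrix (Fin 5) (Fin 5) ℝ :=
  Matrix.of fun i j =>
    if hi : (i : ℕ) < 3 then
      if hj : (j : ℕ) < 3 then R ⟨i, hi⟩ ⟨j, hj⟩
      else if (j : ℕ) = 3 then v ⟨i, hi⟩
      else p ⟨i, hi⟩
    else 0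

/-- The IMU process model `f` on `5 × 5` matrices: for `X` with blocks
`R, v, p`, `f X` has top-left block `R (ω̃)ₓ`, 4th-column top entries
`R ã + g`, 5th-column top entries `v`, and zeros elsewhere. -/
def fIMU (ω a g : Fin 3 → ℝ) (X : Matrix (Fin 5) (Fin 5) ℝ) :
    Matrix (Fin 5) (Fin 5) ℝ :=
  blk5 (blockR X * skew3 ω) (blockR X *ᵥ a + g) (colv X)

lemma se23_eq (R : Matrix (Fin 3) (Fin 3) ℝ) (v p : Fin 3 → ℝ) :
    se23 R v p =
      !![R 0 0, R 0 1, R 0 2, v 0, p 0;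
         R 1 0, R 1 1, R 1 2, v 1, p 1;
         R 2 0, R 2 1, R 2 2, v 2, p 2;
         0, 0, 0, 1, 0;
         0, 0, 0, 0, 1] := by
  ext i j
  fin_cases i <;> fin_cases j <;> rfl

lemma blk5_eq (R : Matrix (Fin 3) (Fin 3) ℝ) (v p : Fin 3 → ℝ) :
    blk5 R v p =
      !![R 0 0, R 0 1, R 0 2, v 0, p 0;
         R 1 0, R 1 1, R 1 2, v 1, p 1;
         R 2 0, R 2 1, R 2 2, v 2, p 2;
         0, 0, 0, 0, 0;
         0, 0, 0, 0, 0] := by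
  ext i j
  fin_cases i <;> fin_cases j <;> rfl

lemma one_eq : (1 : Matrix (Fin 5) (Fin 5) ℝ) = se23 1 0 0 := by
  ext i j
  fin_cases i <;> fin_cases j <;> rfl

lemma blockR_eq (R : Matrix (Fin 3) (Fin 3) ℝ) (v p : Fin 3 → ℝ) :
    blockR (se23 R v p) = R := by
  ext i j
  fin_cases i <;> fin_cases j <;> rfl

lemma colv_eq (R : Matrix (Fin 3) (Fin 3) ℝ) (v p : Fin 3 → ℝ) :
    colv (se23 R v p) = v := by
  ext i
  fin_cases i <;> rfl

set_option maxHeartbeats 4000000 in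
/-- **State-estimate- and input-independence of the right-invariant IMU error
dynamics.** For `η = [[R_η, v_η, p_η], [0, I₂]]`, the right-invariant error
vector field `g_u(η) = f(η) − η f(I₅)` equals the matrix with top-left block
`0`, 4th-column top entries `g − R_η g`, 5th-column top entries `v_η`, and
zeros elsewhere — in particular it does not depend on the inputs `ω̃, ã`. -/
theorem riekf_imu_error_field (ω a g : Fin 3 → ℝ)
    (R : Matrix (Fin 3) (Fin 3) ℝ) (v p : Fin 3 → ℝ) :
    fIMU ω a g (se23 R v p) - se23 R v p * fIMU ω a g 1 =
      blk5 0 (g - R *ᵥ g) v := by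
  rw [one_eq]
  unfold fIMU
  rw [blockR_eq, colv_eq, blockR_eq, colv_eq]
  rw [se23_eq, blk5_eq, blk5_eq, blk5_eq]
  ext i j
  fin_cases i <;> fin_cases j <;>
    · simp [Matrix.mul_apply, Fin.sum_univ_five, skew3, Matrix.mulVec,
        dotProduct, Fin.sum_univ_three, Matrix.one_apply, Matrix.vecHead, Matrix.vecTail]
      try ring
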